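/- Let P = tconv{v_1, …, v_n} ⊆ ℝ^d be a tropical polytope of affine dimension d, let k ∈ {0, …, d}, and let c_k be the k-th corner of (v_1, …, v_n). If H is a closed tropical halfspace (with some apex a and some type I) satisfying P ⊆ H ⊆ c_k + S̄_k, then H = c_k + S̄_k. (Note that c_k + S̄_k is itself the closed tropical halfspace with apex c_k and type {k}.) -/
import Mathlib


open Set

noncomputable section

/-- Extended (homogeneous) coordinates of a point of `TA^d ≅ ℝ^d`:
the 0-th coordinate is normalized to `0`. -/
def ext {d : ℕ} (x : Fin d → ℝ) : Fin (d + 1) → ℝ := Fin.cons 0 x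

/-- The tropical combination of `(l, x)` and `(m, y)`. -/
def tropComb {d : ℕ} (l m : ℝ) (x y : Fin d → ℝ) : Fin d → ℝ :=
  fun i => min (l + x i) (m + y i) - min l m

/-- A set is tropically convex if it is closed under tropical combinations. -/
def TropConvex {d : ℕ} (S : Set (Fin d → ℝ)) : Prop :=
  ∀ x ∈ S, ∀ y ∈ S, ∀ l m : ℝ, tropComb l m x y ∈ S

/-- The tropical convex hull: the intersection of all tropically convex supersets. -/
def tconv {d : ℕ} (V : Set (Fin d → ℝ)) : Set (Fin d → ℝ) :=
  ⋂₀ {S : Set (Fin d → ℝ) | TropConvex S ∧ V ⊆ S}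

/-- A tropical polytope is the tropical convex hull of a finite set. -/
def IsTropPolytope {d : ℕ} (P : Set (Fin d → ℝ)) : Prop :=
  ∃ V : Finset (Fin d → ℝ), P = tconv (V : Set (Fin d → ℝ))

/-- A polytrope is a tropical polytope which is also convex in the ordinary sense. -/
def IsPolytrope {d : ℕ} (P : Set (Fin d → ℝ)) : Prop :=
  IsTropPolytope P ∧ Convex ℝ P

/-- The `k`-th corner of the points `v_1, …, v_n`:
`(c_k)_j = min_i (v_{i,j} - v_{i,k}) - min_i (v_{i,0} - v_{i,k})` for `j = 1, …, d`
(homogeneous coordinates, `v_{i,0} := 0`). -/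
def corner {d n : ℕ} (v : Fin n → Fin d → ℝ) (k : Fin (d + 1)) : Fin d → ℝ :=
  fun j => (⨅ i, (ext (v i) j.succ - ext (v i) k)) - (⨅ i, (ext (v i) 0 - ext (v i) k))

/-- The `k`-th closed sector based at `a`:
`a + S̄_k = {x : x_k - a_k ≤ x_j - a_j for all j}` (homogeneous coordinates). -/
def sector {d : ℕ} (a : Fin d → ℝ) (k : Fin (d + 1)) : Set (Fin d → ℝ) :=
  {x | ∀ j : Fin (d + 1), ext x k - ext a k ≤ ext x j - ext a j}

/-- The closed tropical halfspace with apex `a` (with `a_0 := 0`) and type `I`: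
the set of `x` with `min_{i ∈ I} (x_i - a_i) ≤ min_{j ∉ I} (x_j - a_j)`. -/
def tropHalfspace {d : ℕ} (a : Fin d → ℝ) (I : Set (Fin (d + 1))) : Set (Fin d → ℝ) :=
  {x | ∀ j ∉ I, ∃ i ∈ I, ext x i - ext a i ≤ ext x j - ext a j}

/-- For a tropical polytope `P = tconv{v_1,…,v_n}` of affine dimension `d`,
any closed tropical halfspace `H` squeezed between `P` and the cornered halfspace
`c_k + S̄_k` equals `c_k + S̄_k`. -/
theorem cornered_halfspace_is_minimal {d n : ℕ} (hn : 0 < n)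
    (v : Fin n → Fin d → ℝ) (k : Fin (d + 1))
    (hdim : affineSpan ℝ (tconv (Set.range v)) = ⊤)
    (a : Fin d → ℝ) (I : Set (Fin (d + 1))) (hI : I.Nonempty) (hIu : I ≠ Set.univ)
    (hPH : tconv (Set.range v) ⊆ tropHalfspace a I)
    (hHS : tropHalfspace a I ⊆ sector (corner v k) k) :
    tropHalfspace a I = sector (corner v k) k := by
  have hne : Nonempty (Fin n) := ⟨⟨0, hn⟩⟩
  set c : Fin d → ℝ := corner v k with hc
  set m : Fin (d + 1) → ℝ := fun j => ⨅ i, (ext (v i) j - ext (v i) k) with hm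
  have hmk : m k = 0 := by simp [hm]
  have hcm : ∀ j, ext c j = m j - m 0 := by
    intro j
    refine Fin.cases ?_ (fun j' => ?_) j
    · simp [_root_.ext]
    · simp [_root_.ext, hc, corner, hm]
  -- vertices lie in the halfspace
  have hvH : ∀ i, v i ∈ tropHalfspace a I := by
    intro i
    exact hPH (fun S hS => hS.2 ⟨i, rfl⟩)
  -- every element of I equals k
  have hIk : ∀ i ∈ I, i = k := by
    intro i hiI
    by_contra hik
    set t : ℝ := max 0 (ext a i - ext c i - ext a k + ext c k + 1) with ht
    have ht0 : (0:ℝ) ≤ t := le_max_left _ _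
    have ht1 : ext a i - ext c i - ext a k + ext c k + 1 ≤ t := le_max_right _ _
    set Y : Fin (d + 1) → ℝ := fun j => if j = i then ext a i else ext a j + t with hY
    set x : Fin d → ℝ := fun j => Y j.succ - Y 0 with hx
    have hextx : ∀ j, ext x j = Y j - Y 0 := by
      intro j
      refine Fin.cases ?_ (fun j' => ?_) j
      · simp [_root_.ext]
      · simp [_root_.ext, hx]
    have hxH : x ∈ tropHalfspace a I := by
      intro j hj
      refine ⟨i, hiI, ?_⟩
      rw [hextx, hextx]
      have hYi : Y i = ext a i := by simp [hY]
      have h2 : ext a j ≤ Y j := by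
        by_cases hji : j = i
        · exact absurd (hji ▸ hiI) hj
        · simp only [hY, if_neg hji]; linarith
      linarith
    have hxS := hHS hxH i
    rw [hextx, hextx] at hxS
    have hki : k ≠ i := fun h => hik h.symm
    have hYk : Y k = ext a k + t := by
      simp only [hY, if_neg hki]
    have hYi : Y i = ext a i := by simp [hY]
    rw [hYk, hYi] at hxS
    linarith
  have hkI : k ∈ I := by
    obtain ⟨i0, hi0⟩ := hI
    exact (hIk i0 hi0) ▸ hi0
  -- a itself lies in the halfspace, hence in the sector
  have haH : a ∈ tropHalfspace a I := by
    intro j hj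
    exact ⟨k, hkI, by simp⟩
  have haS := hHS haH
  -- from vertices in H : a_j - a_k ≤ m j
  have hB : ∀ j, ext a j - ext a k ≤ m j := by
    intro j
    by_cases hjk : j = k
    · subst hjk; simp [hmk]
    · apply le_ciInf
      intro i
      have hjI : j ∉ I := fun hjI => hjk (hIk j hjI)
      obtain ⟨i', hi'I, hle⟩ := hvH i j hjI
      have hik : i' = k := hIk i' hi'I
      subst hik
      linarith
  -- from a in the sector : m j ≤ a_j - a_k
  have hC : ∀ j, m j ≤ ext a j - ext a k := by
    intro j
    have := haS j
    rw [hcm j, hcm k, hmk] at this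
    linarith
  refine Set.Subset.antisymm hHS ?_
  intro x hxS j hj
  refine ⟨k, hkI, ?_⟩
  have hs := hxS j
  rw [hcm j, hcm k, hmk] at hs
  have h1 := hB j
  have h2 := hC j
  linarith
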